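/- Let N ≥ 2 and 1 < p < 2 with p > 2N/(N+1). Then the function V(x,t) = k t^{1/(2−p)} ∑ᵢ |xᵢ|^{−p/(2−p)}, for an appropriate constant k = k(p) > 0, is a classical solution of u_t = ∑ᵢ(|u_{xᵢ}|^{p−2}u_{xᵢ})_{xᵢ} on the set where all coordinates are nonzero and t > 0 (it is a sum of separate-variable singular solutions, one per coordinate). -/

import Mathlib

/-- derivative of |x|^e at s ≠ 0 -/
lemma hasDerivAt_abs_rpow' {e s : ℝ} (hs : s ≠ 0) :
    HasDerivAt (fun x : ℝ => |x| ^ e) (e * |s| ^ (e - 2) * s) s := by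
  rcases hs.lt_or_gt with h | h
  · have hne : (-s) ≠ 0 := neg_ne_zero.mpr hs
    have h1 : HasDerivAt (fun x : ℝ => (-x) ^ e) (e * (-s) ^ (e - 1) * (-1)) s := by
      have := Real.hasDerivAt_rpow_const (x := -s) (p := e) (Or.inl hne)
      exact this.comp s ((hasDerivAt_neg s))
    have h2 : (fun x : ℝ => |x| ^ e) =ᶠ[nhds s] fun x => (-x) ^ e := by
      filter_upwards [Iio_mem_nhds h] with x hx
      rw [abs_of_neg hx]
    have h3 : e * (-s) ^ (e - 1) * (-1) = e * |s| ^ (e - 2) * s := by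
      rw [abs_of_neg h]
      have : (-s) ^ (e - 1) = (-s) ^ (e - 2) * (-s) := by
        rw [← Real.rpow_add_one hne]; ring_nf
      rw [this]; ring
    rw [← h3]
    exact h1.congr_of_eventuallyEq h2
  · have h2 : (fun x : ℝ => |x| ^ e) =ᶠ[nhds s] fun x => x ^ e := by
      filter_upwards [Ioi_mem_nhds h] with x hx
      rw [abs_of_pos hx]
    have h1 := Real.hasDerivAt_rpow_const (x := s) (p := e) (Or.inl h.ne')
    have h3 : e * s ^ (e - 1) = e * |s| ^ (e - 2) * s := by
      rw [abs_of_pos h]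
      have : s ^ (e - 1) = s ^ (e - 2) * s := by
        rw [← Real.rpow_add_one h.ne']; ring_nf
      rw [this]; ring
    rw [← h3]
    exact h1.congr_of_eventuallyEq h2

lemma hasDerivAt_abs_rpow_mul {e s : ℝ} (hs : s ≠ 0) :
    HasDerivAt (fun x : ℝ => |x| ^ e * x) ((e + 1) * |s| ^ e) s := by
  have h := (hasDerivAt_abs_rpow' (e := e) hs).fun_mul (hasDerivAt_id' (x := s))
  have : e * |s| ^ (e - 2) * s * s + |s| ^ e * 1 = (e + 1) * |s| ^ e := by
    have h2 : |s| ^ (e - 2) * s * s = |s| ^ e := by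
      have : s * s = |s| ^ (2 : ℝ) := by
        rw [Real.rpow_two, sq_abs]; ring
      rw [mul_assoc, this, ← Real.rpow_add (abs_pos.mpr hs)]; ring_nf
    calc e * |s| ^ (e - 2) * s * s + |s| ^ e * 1
        = e * (|s| ^ (e - 2) * s * s) + |s| ^ e := by ring
      _ = e * |s| ^ e + |s| ^ e := by rw [h2]
      _ = (e + 1) * |s| ^ e := by ring
  rw [← this]
  simpa using h

/-- Partial derivative along the i-th coordinate direction. -/
noncomputable def pderiv' (N : ℕ) (i : Fin N) (u : (Fin N → ℝ) → ℝ) (y : Fin N → ℝ) : ℝ :=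
  deriv (fun t => u (Function.update y i t)) (y i)

lemma pderiv'_eq_of_eventually {N : ℕ} {i : Fin N} {u : (Fin N → ℝ) → ℝ} {g : ℝ → ℝ}
    {x : Fin N → ℝ} {d : ℝ}
    (h : ∀ᶠ s in nhds (x i), u (Function.update x i s) = g s)
    (hg : HasDerivAt g d (x i)) : pderiv' N i u x = d := by
  unfold pderiv'
  rw [Filter.EventuallyEq.deriv_eq h]
  exact hg.deriv

lemma inner_pderiv {N : ℕ} (i : Fin N) (c b : ℝ) (y : Fin N → ℝ) (hy : y i ≠ 0) :
    pderiv' N i (fun z => c * ∑ j, |z j| ^ b) y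
      = c * (b * |y i| ^ (b - 2) * y i) := by
  unfold pderiv'
  have h : HasDerivAt (fun s : ℝ => c * ∑ j, |Function.update y i s j| ^ b)
      (c * ∑ j, (if j = i then b * |y i| ^ (b - 2) * y i else 0)) (y i) := by
    refine HasDerivAt.const_mul c (HasDerivAt.fun_sum fun j _ => ?_)
    rcases eq_or_ne j i with rfl | hj
    · simp only [Function.update_self, if_pos]
      exact hasDerivAt_abs_rpow' hy
    · simp only [Function.update_of_ne hj, if_neg hj]
      exact hasDerivAt_const _ _
  rw [h.deriv]
  simp

lemma flux_eq {p b K s : ℝ} (hK : 0 < K) (hs : s ≠ 0)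
    (hexp : (b - 1) * (p - 2) + (b - 2) = b) :
    |(-K) * (|s| ^ (b - 2) * s)| ^ (p - 2) * ((-K) * (|s| ^ (b - 2) * s))
      = -(K ^ (p - 1)) * (|s| ^ b * s) := by
  have habs : |s| ≠ 0 := abs_ne_zero.mpr hs
  have habsp : (0:ℝ) < |s| := abs_pos.mpr hs
  have h1 : |(-K) * (|s| ^ (b - 2) * s)| = K * |s| ^ (b - 1) := by
    rw [abs_mul, abs_mul, abs_neg, abs_of_pos hK, Real.abs_rpow_of_nonneg (abs_nonneg s),
      abs_abs, ← Real.rpow_add_one habs]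
    ring_nf
  rw [h1, Real.mul_rpow hK.le (Real.rpow_nonneg (abs_nonneg s) _),
    ← Real.rpow_mul (abs_nonneg s)]
  have h2 : K ^ (p - 2) * K = K ^ (p - 1) := by
    rw [← Real.rpow_add_one hK.ne']; ring_nf
  have h3 : |s| ^ ((b - 1) * (p - 2)) * |s| ^ (b - 2) = |s| ^ b := by
    rw [← Real.rpow_add habsp, hexp]
  calc K ^ (p - 2) * |s| ^ ((b - 1) * (p - 2)) * (-K * (|s| ^ (b - 2) * s))
      = -((K ^ (p - 2) * K) * ((|s| ^ ((b - 1) * (p - 2)) * |s| ^ (b - 2)) * s)) := by ring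
    _ = -((K ^ (p - 1)) * ((|s| ^ b) * s)) := by rw [h2, h3]
    _ = -(K ^ (p - 1)) * (|s| ^ b * s) := by ring

theorem stmt19 (N : ℕ) (hN : 2 ≤ N) (p : ℝ)
    (hp1 : 1 < p) (hp2 : p < 2) (hpc : 2 * N / ((N : ℝ) + 1) < p) :
    ∃ k : ℝ, 0 < k ∧
      ∀ (x : Fin N → ℝ) (t : ℝ), (∀ i, x i ≠ 0) → 0 < t →
        deriv (fun s : ℝ => k * s ^ (1 / (2 - p)) * ∑ i, |x i| ^ (-p / (2 - p))) t
          = ∑ i, pderiv' N i (fun y =>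
              |pderiv' N i (fun z =>
                  k * t ^ (1 / (2 - p)) * ∑ j, |z j| ^ (-p / (2 - p))) y| ^ (p - 2)
                * pderiv' N i (fun z =>
                  k * t ^ (1 / (2 - p)) * ∑ j, |z j| ^ (-p / (2 - p))) y) x := by
  have hp0 : (0:ℝ) < p := by linarith
  have h2p : (0:ℝ) < 2 - p := by linarith
  set a : ℝ := 1 / (2 - p) with ha
  set b : ℝ := -p / (2 - p) with hb
  set q : ℝ := p / (2 - p) with hqd
  have hq : 0 < q := div_pos hp0 h2p
  have hbq : b = -q := by rw [hb, hqd, neg_div]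
  have hX : 0 < q ^ (p - 1) * (2 * p - 2) := by
    have := Real.rpow_pos_of_pos hq (p - 1)
    have h2 : (0:ℝ) < 2 * p - 2 := by linarith
    positivity
  set k : ℝ := (q ^ (p - 1) * (2 * p - 2)) ^ a with hkd
  have hk : 0 < k := Real.rpow_pos_of_pos hX a
  refine ⟨k, hk, ?_⟩
  intro x t hx ht
  have hta : 0 < t ^ a := Real.rpow_pos_of_pos ht a
  -- left-hand side
  have hL : HasDerivAt (fun s : ℝ => k * s ^ a * ∑ i, |x i| ^ b)
      (k * (a * t ^ (a - 1)) * ∑ i, |x i| ^ b) t :=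
    ((Real.hasDerivAt_rpow_const (Or.inl ht.ne')).const_mul k).mul_const _
  rw [hL.deriv]
  -- exponent identity
  have hexp : (b - 1) * (p - 2) + (b - 2) = b := by
    rw [hb]; field_simp; ring
  set K : ℝ := k * t ^ a * q with hKd
  have hKpos : 0 < K := mul_pos (mul_pos hk hta) hq
  -- each summand of the right-hand side
  have hterm : ∀ i : Fin N,
      pderiv' N i (fun y =>
          |pderiv' N i (fun z => k * t ^ a * ∑ j, |z j| ^ b) y| ^ (p - 2)
            * pderiv' N i (fun z => k * t ^ a * ∑ j, |z j| ^ b) y) x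
        = -(K ^ (p - 1)) * ((b + 1) * |x i| ^ b) := by
    intro i
    refine pderiv'_eq_of_eventually (g := fun s => -(K ^ (p - 1)) * (|s| ^ b * s)) ?_ ?_
    · filter_upwards [eventually_ne_nhds (hx i)] with s hs
      have hupd : Function.update x i s i = s := Function.update_self i s x
      have hW := inner_pderiv i (k * t ^ a) b (Function.update x i s)
        (by rw [hupd]; exact hs)
      rw [hupd] at hW
      rw [hW]
      have hrw : k * t ^ a * (b * |s| ^ (b - 2) * s) = (-K) * (|s| ^ (b - 2) * s) := by
        rw [hbq, hKd]; ring
      rw [hrw]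
      exact flux_eq hKpos hs hexp
    · exact (hasDerivAt_abs_rpow_mul (hx i)).const_mul _
  simp only [hterm]
  have hsum : ∑ _i : Fin N, -(K ^ (p - 1)) * ((b + 1) * |x _i| ^ b)
      = (-(K ^ (p - 1)) * (b + 1)) * ∑ i, |x i| ^ b := by
    rw [Finset.mul_sum]
    exact Finset.sum_congr rfl fun i _ => by ring
  rw [hsum]
  -- scalar identity
  have e1 : k ^ (p - 1) * k ^ (2 - p) = k := by
    rw [← Real.rpow_add hk]; norm_num
  have e2 : k ^ (2 - p) = q ^ (p - 1) * (2 * p - 2) := by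
    rw [hkd, ← Real.rpow_mul hX.le]
    have : a * (2 - p) = 1 := by rw [ha]; field_simp
    rw [this, Real.rpow_one]
  have e3 : -(b + 1) = (2 * p - 2) * a := by
    rw [hb, ha]; field_simp; ring
  have hKexp : K ^ (p - 1) = k ^ (p - 1) * t ^ (a - 1) * q ^ (p - 1) := by
    rw [hKd, Real.mul_rpow (mul_pos hk hta).le hq.le,
      Real.mul_rpow hk.le hta.le, ← Real.rpow_mul ht.le]
    have : a * (p - 1) = a - 1 := by rw [ha]; field_simp; ring
    rw [this]
  have hscalar : k * (a * t ^ (a - 1)) = -(K ^ (p - 1)) * (b + 1) := by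
    rw [hKexp]
    calc k * (a * t ^ (a - 1))
        = (k ^ (p - 1) * k ^ (2 - p)) * (a * t ^ (a - 1)) := by rw [e1]
      _ = (k ^ (p - 1) * (q ^ (p - 1) * (2 * p - 2))) * (a * t ^ (a - 1)) := by rw [e2]
      _ = (k ^ (p - 1) * t ^ (a - 1) * q ^ (p - 1)) * ((2 * p - 2) * a) := by ring
      _ = (k ^ (p - 1) * t ^ (a - 1) * q ^ (p - 1)) * (-(b + 1)) := by rw [← e3]
      _ = -(k ^ (p - 1) * t ^ (a - 1) * q ^ (p - 1)) * (b + 1) := by ring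
  rw [hscalar]
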